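/- Let p be a prime and a, b integers. If every complex root of the polynomial h(X) = X^4 + a*sqrt(p)*X^3 + b*X^2 + a*sqrt(p)*X + 1 has absolute value 1, then |a| ≤ 4/sqrt(p), b ≤ a^2*p/4 + 2, (p*a^2 - 4)/2 ≤ b, and 4*p*a^2 ≤ (b+2)^2. -/

import Mathlib

lemma aux_unit_circle (w : ℂ)
    (h : ∀ z : ℂ, z ^ 2 - w * z + 1 = 0 → ‖z‖ = 1) :
    ∃ t : ℝ, |t| ≤ 2 ∧ w = (t : ℂ) := by
  obtain ⟨d, hd⟩ := IsAlgClosed.exists_pow_nat_eq (k := ℂ) (w ^ 2 - 4) (n := 2) (by norm_num)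
  set z : ℂ := (w + d) / 2 with hzdef
  have hz : z ^ 2 - w * z + 1 = 0 := by
    rw [hzdef]; linear_combination hd / 4
  have habs : ‖z‖ = 1 := h z hz
  have hz0 : z ≠ 0 := by
    intro h0; rw [h0] at habs; simp at habs
  have hmc : z * (starRingEnd ℂ) z = 1 := by
    rw [Complex.mul_conj, Complex.normSq_eq_norm_sq, habs]; norm_num
  have h2 : w * z = (z + (starRingEnd ℂ) z) * z := by
    linear_combination (-1 : ℂ) * hz - hmc
  have hw : w = z + (starRingEnd ℂ) z := mul_right_cancel₀ hz0 h2
  refine ⟨2 * z.re, ?_, ?_⟩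
  · have hre : |z.re| ≤ 1 := by
      have := Complex.abs_re_le_norm z
      rw [habs] at this; exact this
    calc |2 * z.re| = 2 * |z.re| := by rw [abs_mul]; norm_num
      _ ≤ 2 := by linarith
  · rw [hw, Complex.add_conj]

theorem stmt_0 (p : ℕ) (hp : p.Prime) (a b : ℤ)
    (hroots : ∀ z : ℂ,
      z ^ 4 + (a : ℂ) * (Real.sqrt p : ℂ) * z ^ 3 + (b : ℂ) * z ^ 2
        + (a : ℂ) * (Real.sqrt p : ℂ) * z + 1 = 0 → ‖z‖ = 1) :
    |(a : ℝ)| ≤ 4 / Real.sqrt p ∧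
    (b : ℝ) ≤ (a : ℝ) ^ 2 * p / 4 + 2 ∧
    ((p : ℝ) * (a : ℝ) ^ 2 - 4) / 2 ≤ (b : ℝ) ∧
    4 * (p : ℝ) * (a : ℝ) ^ 2 ≤ ((b : ℝ) + 2) ^ 2 := by
  set s : ℝ := Real.sqrt p with hsdef
  have hs0 : 0 < s := Real.sqrt_pos.mpr (by exact_mod_cast hp.pos)
  have hp2 : (p : ℝ) = s ^ 2 := (Real.sq_sqrt (by positivity)).symm
  obtain ⟨d, hd⟩ := IsAlgClosed.exists_pow_nat_eq (k := ℂ)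
    (((a : ℂ) * (s : ℂ)) ^ 2 - 4 * ((b : ℂ) - 2)) (n := 2) (by norm_num)
  set w1 : ℂ := (-(a : ℂ) * (s : ℂ) + d) / 2 with hw1def
  set w2 : ℂ := (-(a : ℂ) * (s : ℂ) - d) / 2 with hw2def
  have hsum : w1 + w2 = -((a : ℂ) * (s : ℂ)) := by rw [hw1def, hw2def]; ring
  have hprod : w1 * w2 = (b : ℂ) - 2 := by
    rw [hw1def, hw2def]; linear_combination (-(1 : ℂ) / 4) * hd
  have hfact : ∀ z : ℂ, z ^ 4 + (a : ℂ) * (s : ℂ) * z ^ 3 + (b : ℂ) * z ^ 2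
      + (a : ℂ) * (s : ℂ) * z + 1 = (z ^ 2 - w1 * z + 1) * (z ^ 2 - w2 * z + 1) := by
    intro z
    linear_combination (z ^ 2 / 4) * hd
  have h1 : ∀ z : ℂ, z ^ 2 - w1 * z + 1 = 0 → ‖z‖ = 1 := by
    intro z hz
    apply hroots
    rw [hfact z, hz, zero_mul]
  have h2 : ∀ z : ℂ, z ^ 2 - w2 * z + 1 = 0 → ‖z‖ = 1 := by
    intro z hz
    apply hroots
    rw [hfact z, hz, mul_zero]
  obtain ⟨t1, ht1, hwt1⟩ := aux_unit_circle w1 h1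
  obtain ⟨t2, ht2, hwt2⟩ := aux_unit_circle w2 h2
  rw [abs_le] at ht1 ht2
  have hS : t1 + t2 = -((a : ℝ) * s) := by
    have := hsum
    rw [hwt1, hwt2] at this
    exact_mod_cast this
  have hP : t1 * t2 = (b : ℝ) - 2 := by
    have := hprod
    rw [hwt1, hwt2] at this
    exact_mod_cast this
  have hK : (a : ℝ) ^ 2 * s ^ 2 = (t1 + t2) ^ 2 := by
    linear_combination ((a : ℝ) * s - t1 - t2) * hS
  refine ⟨?_, ?_, ?_, ?_⟩
  · rw [le_div_iff₀ hs0]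
    have heq : |(a : ℝ)| * s = |(a : ℝ) * s| := by rw [abs_mul, abs_of_pos hs0]
    rw [heq, abs_le]
    constructor <;> nlinarith [hS, ht1.1, ht1.2, ht2.1, ht2.2]
  · rw [hp2]
    nlinarith [sq_nonneg (t1 - t2), hK, hP]
  · rw [hp2]
    nlinarith [hK, hP, mul_nonneg (by linarith [ht1.2] : (0:ℝ) ≤ 2 - t1) (by linarith [ht1.1] : (0:ℝ) ≤ 2 + t1),
      mul_nonneg (by linarith [ht2.2] : (0:ℝ) ≤ 2 - t2) (by linarith [ht2.1] : (0:ℝ) ≤ 2 + t2)]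
  · rw [hp2]
    have hb : (b : ℝ) = t1 * t2 + 2 := by linarith [hP]
    have hn1 : (0:ℝ) ≤ (2 - t1) * (2 - t2) :=
      mul_nonneg (by linarith [ht1.2]) (by linarith [ht2.2])
    have hn2 : (0:ℝ) ≤ (2 + t1) * (2 + t2) :=
      mul_nonneg (by linarith [ht1.1]) (by linarith [ht2.1])
    have key : ((b : ℝ) + 2) ^ 2 - 4 * s ^ 2 * (a : ℝ) ^ 2
        = ((2 - t1) * (2 - t2)) * ((2 + t1) * (2 + t2)) := by
      rw [hb]; linear_combination (-4 : ℝ) * hK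
    nlinarith [key, mul_nonneg hn1 hn2]
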